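/- Let j, k, a, n be positive integers and N an integer. Suppose that every integer m with n < m < N is (j,k)-representable, and that a^k − (a−1)^k < N − n. Then every integer m' with n + 1 < m' < N + a^k is (j+1, k)-representable. -/

import Mathlib

/-- A positive integer `n` is `(j,k)`-representable if it is a sum of exactly `j`
positive `k`-th powers. -/
def IsRepr (n j k : ℕ) : Prop :=
  ∃ a : Fin j → ℕ, (∀ i, 0 < a i) ∧ ∑ i, (a i) ^ k = n

/-- The successive gap `(x+1)^k - x^k` is monotone in `x ≥ 0`. -/
lemma gap_mono (k : ℕ) {x y : ℕ} (hxy : x ≤ y) :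
    ((x : ℤ) + 1) ^ k - (x : ℤ) ^ k ≤ ((y : ℤ) + 1) ^ k - (y : ℤ) ^ k := by
  have key : ∀ z : ℕ, ((z : ℤ) + 1) ^ k - (z : ℤ) ^ k
      = ∑ i ∈ Finset.range k, (z : ℤ) ^ i * (k.choose i) := by
    intro z
    have := add_pow (z : ℤ) 1 k
    simp only [one_pow, mul_one] at this
    rw [this, Finset.sum_range_succ, Nat.choose_self]
    push_cast
    ring
  rw [key x, key y]
  apply Finset.sum_le_sum
  intro i _
  have : (x : ℤ) ^ i ≤ (y : ℤ) ^ i := by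
    apply pow_le_pow_left₀ (by positivity)
    exact_mod_cast hxy
  exact mul_le_mul_of_nonneg_right this (by positivity)

/-- if every integer `m` with `n < m < N` is `(j,k)`-representable and
`a^k - (a-1)^k < N - n`, then every integer `m'` with `n + 1 < m' < N + a^k` is
`(j+1, k)`-representable. -/
theorem stmt_1 (j k a n : ℕ) (N : ℤ)
    (hj : 0 < j) (hk : 0 < k) (ha : 0 < a) (hn : 0 < n)
    (hrep : ∀ m : ℕ, (n : ℤ) < m → (m : ℤ) < N → IsRepr m j k)
    (hgap : (a : ℤ) ^ k - ((a : ℤ) - 1) ^ k < N - (n : ℤ)) :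
    ∀ m' : ℕ, (n : ℤ) + 1 < (m' : ℤ) → (m' : ℤ) < N + (a : ℤ) ^ k →
      IsRepr m' (j + 1) k := by
  intro m' hlow hhigh
  classical
  set P : ℕ → Prop := fun b => (n : ℤ) + (b : ℤ) ^ k < (m' : ℤ) with hP
  have hP1 : P 1 := by simpa [hP] using hlow
  set b : ℕ := Nat.findGreatest P a with hb
  have hb1 : 1 ≤ b := Nat.le_findGreatest ha hP1
  have hba : b ≤ a := Nat.findGreatest_le a
  have hPb : P b := Nat.findGreatest_spec ha hP1
  -- the remainder
  have hbk_lt : b ^ k < m' := by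
    have : (b : ℤ) ^ k < (m' : ℤ) := by
      have := hPb
      simp only [hP] at this
      have hn0 : (0 : ℤ) ≤ n := by positivity
      linarith
    exact_mod_cast this
  set m'' : ℕ := m' - b ^ k with hm''
  have hsum : b ^ k + m'' = m' := Nat.add_sub_cancel' hbk_lt.le
  have hm''cast : (m'' : ℤ) = (m' : ℤ) - (b : ℤ) ^ k := by
    have : ((b ^ k + m'' : ℕ) : ℤ) = (m' : ℤ) := by exact_mod_cast congrArg (Nat.cast : ℕ → ℤ) hsum
    push_cast at this
    linarith
  have hlow' : (n : ℤ) < (m'' : ℤ) := by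
    rw [hm''cast]
    have := hPb
    simp only [hP] at this
    linarith
  have hhigh' : (m'' : ℤ) < N := by
    rw [hm''cast]
    rcases eq_or_lt_of_le hba with heq | hlt
    · rw [heq]; linarith
    · -- b < a : maximality gives m' ≤ n + (b+1)^k
      have hnotP : ¬ P (b + 1) := Nat.findGreatest_is_greatest (P := P) (n := a) (by rw [← hb]; omega) (by omega)
      simp only [hP, not_lt] at hnotP
      have hmono : ((b : ℤ) + 1) ^ k - (b : ℤ) ^ k
          ≤ (((a - 1 : ℕ) : ℤ) + 1) ^ k - ((a - 1 : ℕ) : ℤ) ^ k :=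
        gap_mono k (by omega)
      have hc1 : ((a - 1 : ℕ) : ℤ) = (a : ℤ) - 1 := by
        push_cast [Nat.cast_sub ha]; ring
      rw [hc1] at hmono
      have hc2 : ((a : ℤ) - 1 + 1) = (a : ℤ) := by ring
      rw [hc2] at hmono
      have : (m' : ℤ) ≤ (n : ℤ) + ((b : ℤ) + 1) ^ k := by exact_mod_cast hnotP
      linarith
  obtain ⟨g, hgpos, hgsum⟩ := hrep m'' hlow' hhigh'
  refine ⟨Fin.cons b g, ?_, ?_⟩
  · intro i
    refine Fin.cases ?_ ?_ i
    · exact Nat.lt_of_lt_of_le Nat.zero_lt_one hb1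
    · intro i'; simpa using hgpos i'
  · rw [Fin.sum_univ_succ]
    simpa [hgsum] using hsum
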